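/- The graph G(C,X) of the exact-cover construction is chordal: it contains no induced cycle on four or more vertices. -/

import Mathlib

open SimpleGraph

/-- Vertex type of the exact-cover construction: `Sum.inl ⟨i, x⟩` is `w_{i,x}` (for
`x ∈ c_i`), `Sum.inr (Sum.inl (i, 0))` is `w_i^+`, `Sum.inr (Sum.inl (i, 1))` is
`w_i^-`, and `Sum.inr (Sum.inr x)` is `v_x`. -/
abbrev XCVert (α : Type*) (m : ℕ) (C : Fin m → Finset α) : Type _ :=
  (Σ i : Fin m, {x : α // x ∈ C i}) ⊕ ((Fin m × Fin 2) ⊕ α)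

/-- The graph `G(C,X)` of the exact-cover construction: each `W_i` is a clique on
`{w_{i,x} : x ∈ c_i} ∪ {w_i^+, w_i^-}`, all edges between `{w_{i,x}}` and `{w_{j,y}}`
for `i ≠ j` are present, and `v_x` is adjacent to `w_{i,x}` for each `i` with `x ∈ c_i`. -/
def XCGraph {α : Type*} (m : ℕ) (C : Fin m → Finset α) :
    SimpleGraph (XCVert α m C) :=
  SimpleGraph.fromRel (fun a b =>
    match a, b with
    | Sum.inl _, Sum.inl _ => True
    | Sum.inl ⟨i, _⟩, Sum.inr (Sum.inl (j, _)) => i = j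
    | Sum.inr (Sum.inl (i, _)), Sum.inr (Sum.inl (j, _)) => i = j
    | Sum.inl ⟨_, x⟩, Sum.inr (Sum.inr y) => (x : α) = y
    | _, _ => False)

/-- Two distinct `w`-vertices are always adjacent: the `w` layer is a clique. -/
lemma xc_inl_adj {α : Type*} {m : ℕ} {C : Fin m → Finset α}
    {p q : Σ i : Fin m, {x : α // x ∈ C i}}
    (h : (Sum.inl p : XCVert α m C) ≠ Sum.inl q) :
    (XCGraph m C).Adj (Sum.inl p) (Sum.inl q) := by
  unfold XCGraph
  rw [fromRel_adj]
  exact ⟨h, Or.inl trivial⟩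

/-- The neighborhood of any vertex of the right summand (`w_i^±` or `v_x`) is a clique:
two distinct neighbors of such a vertex are adjacent. -/
lemma xc_key {α : Type*} {m : ℕ} {C : Fin m → Finset α} {a c : XCVert α m C}
    (t : (Fin m × Fin 2) ⊕ α)
    (hab : (XCGraph m C).Adj a (Sum.inr t)) (hbc : (XCGraph m C).Adj (Sum.inr t) c)
    (hac : a ≠ c) : (XCGraph m C).Adj a c := by
  unfold XCGraph at hab hbc ⊢
  rw [fromRel_adj] at hab hbc ⊢
  refine ⟨hac, ?_⟩
  obtain ⟨-, hab⟩ := hab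
  obtain ⟨-, hbc⟩ := hbc
  rcases a with ⟨i, x⟩ | (⟨i, e⟩ | x) <;> rcases c with ⟨j, y⟩ | (⟨j, e'⟩ | y) <;>
    rcases t with ⟨l, d⟩ | z <;> dsimp only at hab hbc ⊢ <;>
    first | (simp_all; done) | aesop

private lemma modh (a b n : ℕ) (h : a = n + b) (hb : b < n) : a % n = b := by
  subst h; rw [Nat.add_mod_left, Nat.mod_eq_of_lt hb]

/-- Rotation automorphism of the cycle graph. -/
def cycleRot {n : ℕ} (t : Fin (n + 4)) : cycleGraph (n + 4) ≃g cycleGraph (n + 4) where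
  toEquiv := Equiv.addRight t
  map_rel_iff' := by
    intro a b
    simp only [Equiv.coe_addRight]
    rw [cycleGraph_adj, cycleGraph_adj, add_sub_add_right_eq_sub, add_sub_add_right_eq_sub]

/-- The graph `G(C,X)` of the exact-cover construction is chordal: it contains no
induced cycle on four or more vertices. -/
theorem XCGraph_chordal {α : Type*} [Fintype α] [DecidableEq α] (q m : ℕ)
    (hq : Fintype.card α = 3 * q) (C : Fin m → Finset α)
    (hC : ∀ i, (C i).card = 3) :
    ∀ n : ℕ, 4 ≤ n → IsEmpty (SimpleGraph.cycleGraph n ↪g XCGraph m C) := by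
  intro n hn
  obtain ⟨N, rfl⟩ : ∃ N, n = N + 4 := ⟨n - 4, by omega⟩
  constructor
  intro f
  have h2 : ((2 : Fin (N + 4)) : ℕ) = 2 := by simp [Fin.coe_ofNat_eq_mod, Nat.mod_eq_of_lt]
  have hne02 : (0 : Fin (N + 4)) ≠ 2 := by simp [Fin.ext_iff, h2, Nat.mod_eq_of_lt (show 2 < N + 4 by omega)]
  have h02 : ¬ (cycleGraph (N + 4)).Adj 0 2 := by
    rw [cycleGraph_adj']
    simp only [Fin.sub_def, Fin.val_zero, h2]
    rw [Nat.mod_eq_of_lt (show N + 4 - 2 + 0 < N + 4 by omega),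
      modh (N + 4 - 0 + 2) 2 (N + 4) (by omega) (by omega)]
    omega
  by_cases h : ∀ k : Fin (N + 4), ∃ p, f k = Sum.inl p
  · -- all cycle vertices are in the `w` clique; but `f 0` and `f 2` are nonadjacent
    obtain ⟨p, hp⟩ := h 0
    obtain ⟨p', hp'⟩ := h 2
    have hadj : (XCGraph m C).Adj (f 0) (f 2) := by
      rw [hp, hp']
      exact xc_inl_adj (by rw [← hp, ← hp']; exact fun e => hne02 (f.injective e))
    exact h02 (f.map_adj_iff.mp hadj)
  · -- some cycle vertex is `w_i^±` or `v_x`; rotate it to position 1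
    push_neg at h
    obtain ⟨k, hk⟩ := h
    obtain ⟨t, ht⟩ : ∃ t, f k = Sum.inr t := by
      rcases hfk : f k with p | t'
      · exact absurd hfk (hk p)
      · exact ⟨t', rfl⟩
    set g : cycleGraph (N + 4) ↪g XCGraph m C := f.comp (cycleRot (k - 1)).toEmbedding with hg
    have hg1 : g 1 = Sum.inr t := by
      have : (1 : Fin (N + 4)) + (k - 1) = k := by
        rw [add_comm (1 : Fin (N + 4)) (k - 1), sub_add_cancel]
      show f ((1 : Fin (N + 4)) + (k - 1)) = Sum.inr t
      rw [this, ht]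
    have hadj01 : (cycleGraph (N + 4)).Adj 0 1 := by
      rw [cycleGraph_adj']
      simp [Fin.sub_def, Nat.mod_eq_of_lt]
    have hadj12 : (cycleGraph (N + 4)).Adj 1 2 := by
      rw [cycleGraph_adj']
      simp only [Fin.sub_def, Fin.val_one, h2]
      right
      rw [modh (N + 4 - 1 + 2) 1 (N + 4) (by omega) (by omega)]
    have A1 : (XCGraph m C).Adj (g 0) (Sum.inr t) := by
      rw [← hg1]; exact g.map_adj_iff.mpr hadj01
    have A2 : (XCGraph m C).Adj (Sum.inr t) (g 2) := by
      rw [← hg1]; exact g.map_adj_iff.mpr hadj12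
    have hne : g 0 ≠ g 2 := fun e => hne02 (g.injective e)
    exact h02 (g.map_adj_iff.mp (xc_key t A1 A2 hne))
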